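/- If Z is a computable real, then a real X is Martin-Löf random with respect to μ_Z if and only if X = Z ⊕ Y for some Y that is Martin-Löf random with respect to the uniform measure λ. -/

import Mathlib

open MeasureTheory Filter

abbrev Cantor : Type := ℕ → Bool
abbrev Str : Type := List Bool

def restr (X : Cantor) (n : ℕ) : Str := (List.range n).map X

def cyl (σ : Str) : Set Cantor := {X | restr X σ.length = σ}

def openOf (V : Set Str) : Set Cantor := ⋃ σ ∈ V, cyl σ

def CE {α : Type} [Primcodable α] (S : Set α) : Prop :=
  ∃ f : α →. Unit, Partrec f ∧ ∀ a, a ∈ S ↔ (f a).Dom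

def MLTest (μ : Measure Cantor) (U : ℕ → Set Str) : Prop :=
  CE {p : ℕ × Str | p.2 ∈ U p.1} ∧ ∀ i, μ (openOf (U i)) ≤ 1 / 2 ^ i

def MLRandom (μ : Measure Cantor) (X : Cantor) : Prop :=
  ∀ U, MLTest μ U → ∃ i, X ∉ openOf (U i)

noncomputable def cm (μ : Measure Cantor) (σ : Str) : ℝ := (μ (cyl σ)).toReal

def ComputableMeasure (μ : Measure Cantor) : Prop :=
  IsProbabilityMeasure μ ∧
    ∃ g : Str × ℕ → ℚ, Computable g ∧
      ∀ σ n, |(g (σ, n) : ℝ) - cm μ σ| ≤ (2 : ℝ)⁻¹ ^ n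

def interleave (Z Y : Cantor) : Cantor := fun n => if n % 2 = 0 then Z (n / 2) else Y (n / 2)

/-- The defining cylinder equations of the measure `μ_Z`: at odd levels the mass is split
evenly, at even levels all the mass goes to the bit `Z(|σ|/2)`. -/
def MuZSpec (Z : Cantor) (μ : Measure Cantor) : Prop :=
  IsProbabilityMeasure μ ∧
    (∀ σ : Str, Odd σ.length → ∀ b : Bool, μ (cyl (σ ++ [b])) = μ (cyl σ) / 2) ∧
    (∀ σ : Str, Even σ.length →
      μ (cyl (σ ++ [Z (σ.length / 2)])) = μ (cyl σ) ∧
      μ (cyl (σ ++ [!Z (σ.length / 2)])) = 0)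

/-- The uniform (Lebesgue) measure on Cantor space, characterized by its cylinder values. -/
def UniformSpec (lam : Measure Cantor) : Prop :=
  IsProbabilityMeasure lam ∧ ∀ σ : Str, lam (cyl σ) = (2 : ENNReal)⁻¹ ^ σ.length

/-- For computable `Z`, a real is `μ_Z`-Martin-Löf random if and only if it is of the form
`Z ⊕ Y` for `Y` Martin-Löf random with respect to the uniform measure. -/

@[simp] lemma length_restr (X : Cantor) (n : ℕ) : (restr X n).length = n := by
  simp [restr]

@[simp] lemma getElem_restr (X : Cantor) {n i : ℕ} (h : i < (restr X n).length) :
    (restr X n)[i] = X i := by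
  simp [restr]

lemma getD_restr (X : Cantor) {n i : ℕ} (h : i < n) (d : Bool) :
    (restr X n).getD i d = X i := by
  rw [List.getD_eq_getElem _ _ (by simpa using h)]; simp

lemma restr_succ (X : Cantor) (n : ℕ) : restr X (n+1) = restr X n ++ [X n] := by
  simp [restr, List.range_succ]

lemma mem_cyl {X : Cantor} {σ : Str} :
    X ∈ cyl σ ↔ ∀ i < σ.length, X i = σ.getD i false := by
  constructor
  · intro h i hi
    conv_rhs => rw [← h]
    rw [getD_restr X hi]
  · intro h
    show restr X σ.length = σ
    apply List.ext_getElem (by simp)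
    intro i h1 h2
    rw [getElem_restr, h i h2, List.getD_eq_getElem _ _ h2]

lemma restr_take {X : Cantor} {m n : ℕ} (h : m ≤ n) :
    (restr X n).take m = restr X m := by
  simp [restr, ← List.map_take, List.take_range, Nat.min_eq_left h]

lemma mem_cyl_restr (X : Cantor) (n : ℕ) : X ∈ cyl (restr X n) := by
  show restr X _ = _
  rw [length_restr]

lemma measurable_cyl (σ : Str) : MeasurableSet (cyl σ) := by
  have : cyl σ = ⋂ i ∈ {i : ℕ | i < σ.length}, (fun X : Cantor => X i) ⁻¹' {σ.getD i false} := by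
    ext X; simp [mem_cyl]
  rw [this]
  exact MeasurableSet.biInter (Set.to_countable _)
    (fun i _ => measurable_pi_apply i (measurableSet_singleton _))

lemma measurable_openOf (V : Set Str) : MeasurableSet (openOf V) :=
  MeasurableSet.biUnion (Set.to_countable V) (fun σ _ => measurable_cyl σ)

def Cyls : Set (Set Cantor) := {A | A = ∅ ∨ ∃ σ : Str, A = cyl σ}

lemma cyl_subset_cyl {σ τ : Str} (h : σ.length ≤ τ.length) (h2 : τ.take σ.length = σ) :
    cyl τ ⊆ cyl σ := by
  intro X hX
  have hτ : restr X τ.length = τ := hX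
  show restr X σ.length = σ
  rw [← restr_take h, hτ, h2]

lemma isPiSystem_Cyls : IsPiSystem Cyls := by
  rintro A (rfl | ⟨σ, rfl⟩) B hB hne
  · simp at hne
  rcases hB with rfl | ⟨τ, rfl⟩
  · simp at hne
  obtain ⟨X, hX1, hX2⟩ := hne
  have hs : restr X σ.length = σ := hX1
  have ht : restr X τ.length = τ := hX2
  rcases le_total σ.length τ.length with h | h
  · have : cyl τ ⊆ cyl σ := cyl_subset_cyl h (by rw [← ht, restr_take h, hs])
    right; exact ⟨τ, by rw [Set.inter_eq_right.2 this]⟩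
  · have : cyl σ ⊆ cyl τ := cyl_subset_cyl h (by rw [← hs, restr_take h, ht])
    right; exact ⟨σ, by rw [Set.inter_eq_left.2 this]⟩

lemma coord_measurable_gen (i : ℕ) (b : Bool) :
    MeasurableSet[MeasurableSpace.generateFrom Cyls] {X : Cantor | X i = b} := by
  have : {X : Cantor | X i = b}
      = ⋃ σ ∈ {σ : Str | σ.length = i + 1 ∧ σ.getD i false = b}, cyl σ := by
    ext X
    simp only [Set.mem_setOf_eq, Set.mem_iUnion]
    constructor
    · intro h
      refine ⟨restr X (i+1), ⟨by simp [length_restr], ?_⟩, mem_cyl_restr X (i+1)⟩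
      rw [getD_restr X (Nat.lt_succ_self i)]; exact h
    · rintro ⟨σ, ⟨hlen, hlast⟩, hX⟩
      have := (mem_cyl.1 hX) i (by omega)
      rw [this, hlast]
  rw [this]
  exact MeasurableSet.biUnion (Set.to_countable _)
    (fun σ _ => MeasurableSpace.measurableSet_generateFrom (Or.inr ⟨σ, rfl⟩))

lemma generateFrom_Cyls : (inferInstance : MeasurableSpace Cantor)
    = MeasurableSpace.generateFrom Cyls := by
  apply le_antisymm
  · show MeasurableSpace.pi ≤ _
    refine iSup_le fun i => ?_
    rw [MeasurableSpace.comap_le_iff_le_map]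
    intro s _
    show MeasurableSet[MeasurableSpace.generateFrom Cyls] ((fun X : Cantor => X i) ⁻¹' s)
    have : (fun X : Cantor => X i) ⁻¹' s = ⋃ b ∈ s, {X : Cantor | X i = b} := by
      ext X; simp
    rw [this]
    exact MeasurableSet.biUnion (Set.to_countable _) (fun b _ => coord_measurable_gen i b)
  · apply MeasurableSpace.generateFrom_le
    rintro A (rfl | ⟨σ, rfl⟩)
    · exact MeasurableSet.empty
    · exact measurable_cyl σ

attribute [local instance] Classical.propDecidable

section Z
variable (Z : Cantor)

@[simp] lemma interleave_even (Y : Cantor) (k : ℕ) : interleave Z Y (2*k) = Z k := by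
  simp [interleave, Nat.mul_mod_right]

@[simp] lemma interleave_odd (Y : Cantor) (k : ℕ) : interleave Z Y (2*k+1) = Y k := by
  have h1 : (2*k+1) % 2 = 1 := by omega
  simp [interleave, h1]; congr 1; omega

def evenOK (σ : Str) : Prop := ∀ k, 2*k < σ.length → σ.getD (2*k) false = Z k

def oddPart (σ : Str) : Str := (List.range (σ.length / 2)).map (fun k => σ.getD (2*k+1) false)

@[simp] lemma length_oddPart (σ : Str) : (oddPart σ).length = σ.length / 2 := by
  simp [oddPart]

lemma getD_oddPart (σ : Str) {k : ℕ} (h : k < σ.length / 2) (d : Bool) :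
    (oddPart σ).getD k d = σ.getD (2*k+1) false := by
  rw [List.getD_eq_getElem _ _ (by simpa using h)]
  simp [oddPart]

@[simp] lemma cyl_nil : cyl ([] : Str) = Set.univ := by
  ext X; simp [cyl, restr]

lemma evenOK_nil : evenOK Z [] := by intro k hk; simp at hk

-- value of μZ on cylinders
lemma muZ_cyl {μ : Measure Cantor} (hμ : MuZSpec Z μ) (σ : Str) :
    μ (cyl σ) = if evenOK Z σ then (2 : ENNReal)⁻¹ ^ (σ.length / 2) else 0 := by
  induction σ using List.reverseRecOn with
  | nil =>
    simp [evenOK_nil, hμ.1.measure_univ]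
  | append_singleton σ b ih =>
    have hlen : (σ ++ [b]).length = σ.length + 1 := by simp
    have hgetD_old : ∀ i < σ.length, (σ ++ [b]).getD i false = σ.getD i false := by
      intro i hi; exact List.getD_append _ _ _ _ hi
    have hgetD_last : (σ ++ [b]).getD σ.length false = b := by
      rw [List.getD_eq_getElem _ _ (by simp)]
      simp
    rcases Nat.even_or_odd σ.length with he | ho
    · -- σ.length even
      obtain ⟨m, hm⟩ := he
      have hm2 : σ.length = 2 * m := by omega
      have hdiv : σ.length / 2 = m := by omega
      have hdiv2 : (σ ++ [b]).length / 2 = m := by rw [hlen]; omega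
      have hEOK : evenOK Z (σ ++ [b]) ↔ (evenOK Z σ ∧ b = Z m) := by
        constructor
        · intro h
          refine ⟨fun k hk => by rw [← hgetD_old _ hk]; exact h k (by omega), ?_⟩
          have := h m (by omega)
          rw [← hm2] at this
          rw [← hgetD_last]; rw [hm2] at this ⊢; exact this
        · rintro ⟨h1, h2⟩ k hk
          rw [hlen] at hk
          rcases Nat.lt_or_ge (2*k) σ.length with h | h
          · rw [hgetD_old _ h]; exact h1 k h
          · have hkm : k = m := by omega
            have h2k : 2*k = σ.length := by omega
            rw [h2k, hgetD_last, hkm]; exact h2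
      rcases Bool.eq_or_eq_not b (Z m) with rfl | rfl
      · have := (hμ.2.2 σ (by exact ⟨m, by omega⟩)).1
        rw [hdiv] at this
        rw [this, ih, hdiv2, hdiv]
        by_cases h : evenOK Z σ
        · rw [if_pos h, if_pos (hEOK.2 ⟨h, rfl⟩)]
        · rw [if_neg h, if_neg (fun hc => h (hEOK.1 hc).1)]
      · have := (hμ.2.2 σ (by exact ⟨m, by omega⟩)).2
        rw [hdiv] at this
        rw [this, if_neg]
        intro hc
        exact Bool.not_ne_self (Z m) ((hEOK.1 hc).2)
    · -- σ.length odd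
      obtain ⟨m, hm⟩ := ho
      have hdiv : σ.length / 2 = m := by omega
      have hdiv2 : (σ ++ [b]).length / 2 = m + 1 := by rw [hlen]; omega
      have hEOK : evenOK Z (σ ++ [b]) ↔ evenOK Z σ := by
        constructor
        · intro h k hk; rw [← hgetD_old _ hk]; exact h k (by omega)
        · intro h k hk
          rw [hlen] at hk
          have : 2*k < σ.length := by omega
          rw [hgetD_old _ this]; exact h k this
      rw [hμ.2.1 σ ⟨m, by omega⟩ b, ih, hdiv, hdiv2]
      by_cases h : evenOK Z σ
      · rw [if_pos h, if_pos (hEOK.2 h), pow_succ]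
        rw [ENNReal.div_eq_inv_mul, mul_comm]
      · rw [if_neg h, if_neg (fun hc => h (hEOK.1 hc)), ENNReal.zero_div]

-- preimage of cylinders under interleaving
lemma preimage_cyl (σ : Str) :
    (fun Y => interleave Z Y) ⁻¹' cyl σ
      = if evenOK Z σ then cyl (oddPart σ) else ∅ := by
  by_cases h : evenOK Z σ
  · rw [if_pos h]
    ext Y
    simp only [Set.mem_preimage, mem_cyl, length_oddPart]
    constructor
    · intro hY k hk
      rw [getD_oddPart σ hk]
      have h21 : 2*k+1 < σ.length := by omega
      have := hY (2*k+1) h21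
      rw [interleave_odd] at this
      exact this
    · intro hY i hi
      rcases Nat.even_or_odd i with ⟨k, hk⟩ | ⟨k, hk⟩
      · have hik : i = 2*k := by omega
        subst hik
        rw [interleave_even]
        exact (h k hi).symm
      · have hik : i = 2*k+1 := by omega
        subst hik
        rw [interleave_odd]
        have hk2 : k < σ.length / 2 := by omega
        rw [← getD_oddPart σ hk2 false]
        exact hY k hk2
  · rw [if_neg h]
    ext Y
    simp only [Set.mem_preimage, Set.mem_empty_iff_false, iff_false]
    intro hY
    apply h
    intro k hk
    have := (mem_cyl.1 hY) (2*k) hk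
    rw [interleave_even] at this
    exact this.symm

lemma measurable_interleave : Measurable (fun Y => interleave Z Y) := by
  rw [measurable_pi_iff]
  intro n
  by_cases h : n % 2 = 0
  · simp only [interleave, if_pos h]; exact measurable_const
  · simp only [interleave, if_neg h]; exact measurable_pi_apply _

-- the pushforward identity
lemma map_interleave {μ lam : Measure Cantor} (hμ : MuZSpec Z μ) (hlam : UniformSpec lam) :
    lam.map (fun Y => interleave Z Y) = μ := by
  haveI : IsProbabilityMeasure lam := hlam.1
  haveI : IsProbabilityMeasure μ := hμ.1
  haveI : IsProbabilityMeasure (lam.map (fun Y => interleave Z Y)) :=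
    Measure.isProbabilityMeasure_map (measurable_interleave Z).aemeasurable
  refine ext_of_generate_finite Cyls generateFrom_Cyls isPiSystem_Cyls ?_ (by simp)
  rintro A (rfl | ⟨σ, rfl⟩)
  · simp
  rw [Measure.map_apply (measurable_interleave Z) (measurable_cyl σ), preimage_cyl,
    muZ_cyl Z hμ]
  by_cases h : evenOK Z σ
  · rw [if_pos h, if_pos h, hlam.2, length_oddPart]
  · rw [if_neg h, if_neg h, measure_empty]

lemma muZ_openOf {μ lam : Measure Cantor} (hμ : MuZSpec Z μ) (hlam : UniformSpec lam)
    (V : Set Str) :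
    μ (openOf V) = lam ((fun Y => interleave Z Y) ⁻¹' openOf V) := by
  rw [← map_interleave Z hμ hlam,
    Measure.map_apply (measurable_interleave Z) (measurable_openOf V)]
end Z

section comp
variable {Z : Cantor} (hZ : Computable Z)
include hZ in

lemma computable_restrZ : Computable (fun n => restr Z n) := by
  have : Computable fun n : ℕ =>
      Nat.rec (motive := fun _ => Str) [] (fun y IH => IH ++ [Z y]) n :=
    Computable.nat_rec Computable.id (Computable.const [])
      ((Computable.list_concat.comp (Computable.snd.comp Computable.snd)
        (hZ.comp (Computable.fst.comp Computable.snd))).to₂)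
  refine this.of_eq fun n => ?_
  induction n with
  | zero => simp [restr]
  | succ n ih => rw [restr_succ, ← ih]

def mix (p : Str × Str) : Str :=
  (List.range (2 * p.2.length)).map
    (fun n => if n % 2 = 0 then p.1.getD (n/2) false else p.2.getD (n/2) false)

lemma primrec_mix : Primrec mix := by
  apply Primrec.list_map
    (Primrec.list_range.comp ((Primrec.nat_mul.comp (Primrec.const 2)
      (Primrec.list_length.comp Primrec.snd))))
  apply Primrec.ite
  · exact PrimrecRel.comp Primrec.eq
      (Primrec.nat_mod.comp Primrec.snd (Primrec.const 2)) (Primrec.const 0)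
  · exact (Primrec.list_getD false).comp (Primrec.fst.comp Primrec.fst)
      (Primrec.nat_div.comp Primrec.snd (Primrec.const 2))
  · exact (Primrec.list_getD false).comp (Primrec.snd.comp Primrec.fst)
      (Primrec.nat_div.comp Primrec.snd (Primrec.const 2))

def itl (Z : Cantor) (τ : Str) : Str := mix (restr Z τ.length, τ)

include hZ in
lemma computable_itl : Computable (itl Z) :=
  (primrec_mix.to_comp).comp
    (Computable.pair ((computable_restrZ hZ).comp Computable.list_length) Computable.id)

lemma primrec_oddPart : Primrec oddPart := by
  apply Primrec.list_map
    (Primrec.list_range.comp (Primrec.nat_div.comp Primrec.list_length (Primrec.const 2)))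
  exact (Primrec.list_getD false).comp Primrec.fst
    (Primrec.succ.comp (Primrec.nat_mul.comp (Primrec.const 2) Primrec.snd))

end comp

section itlfacts
variable (Z : Cantor)

@[simp] lemma length_itl (τ : Str) : (itl Z τ).length = 2 * τ.length := by
  simp [itl, mix]

lemma getElem_itl (τ : Str) {n : ℕ} (h : n < (itl Z τ).length) :
    (itl Z τ)[n] = if n % 2 = 0 then Z (n/2) else τ.getD (n/2) false := by
  rw [length_itl] at h
  have hn2 : n / 2 < τ.length := by omega
  simp only [itl, mix, List.getElem_map, List.getElem_range]
  by_cases hp : n % 2 = 0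
  · rw [if_pos hp, if_pos hp, getD_restr Z hn2]
  · rw [if_neg hp, if_neg hp]

lemma restr_interleave (Y : Cantor) (m : ℕ) :
    restr (interleave Z Y) (2*m) = itl Z (restr Y m) := by
  apply List.ext_getElem (by simp [length_restr])
  intro n h1 h2
  rw [getElem_restr, getElem_itl]
  rcases Nat.even_or_odd n with ⟨k, hk⟩ | ⟨k, hk⟩
  · have hn : n = 2*k := by omega
    subst hn
    rw [if_pos (by omega), interleave_even]
    congr 1; omega
  · have hn : n = 2*k+1 := by omega
    subst hn
    rw [if_neg (by omega), interleave_odd]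
    have : (2*k+1)/2 = k := by omega
    rw [this, getD_restr Y (by rw [length_restr] at h1; omega)]

lemma restr_interleave_odd (Y : Cantor) (m : ℕ) :
    restr (interleave Z Y) (2*m+1) = itl Z (restr Y m) ++ [Z m] := by
  rw [restr_succ, restr_interleave, interleave_even]

lemma oddPart_itl (τ : Str) : oddPart (itl Z τ) = τ := by
  apply List.ext_getElem (by rw [length_oddPart, length_itl]; omega)
  intro k h1 h2
  rw [length_oddPart, length_itl] at h1
  have hk : k < τ.length := by omega
  rw [← List.getD_eq_getElem (oddPart (itl Z τ)) false (by rw [length_oddPart, length_itl]; omega),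
    getD_oddPart _ (by rw [length_itl]; omega),
    List.getD_eq_getElem _ _ (by rw [length_itl]; omega), getElem_itl]
  rw [if_neg (by omega)]
  have : (2*k+1)/2 = k := by omega
  rw [this, List.getD_eq_getElem _ _ hk]

lemma itl_injective : Function.Injective (itl Z) := by
  intro a b h
  rw [← oddPart_itl Z a, h, oddPart_itl]

lemma mem_cyl_itl {X : Cantor} {τ : Str} :
    X ∈ cyl (itl Z τ) ↔ restr X (2 * τ.length) = itl Z τ := by
  show restr X (itl Z τ).length = _ ↔ _
  rw [length_itl]

end itlfacts

-- CE lemmas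
section CEl
variable {α β : Type} [Primcodable α] [Primcodable β]

lemma CE.guard {S : Set β} (hS : CE S) {g : α → β} (hg : Computable g)
    {c : α → Bool} (hc : Computable c) : CE {a | c a = true ∧ g a ∈ S} := by
  obtain ⟨f, hf, hdom⟩ := hS
  refine ⟨fun a => bif c a then f (g a) else Part.none,
    Partrec.cond hc (hf.comp hg) Partrec.none, fun a => ?_⟩
  rcases hca : c a with _ | _
  · simp [hca, Part.not_none_dom]
  · simp [hca, hdom]

lemma CE.or {S : Set β} (hS : CE S) {g₁ g₂ : α → β} (hg₁ : Computable g₁)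
    (hg₂ : Computable g₂) : CE {a | g₁ a ∈ S ∨ g₂ a ∈ S} := by
  obtain ⟨f, hf, hdom⟩ := hS
  obtain ⟨k, hk, H⟩ := Partrec.merge' (hf.comp hg₁) (hf.comp hg₂)
  exact ⟨k, hk, fun a => by rw [(H a).2]; simp [Set.mem_setOf_eq, hdom]⟩

lemma CE.ofBool {c : α → Bool} (hc : Computable c) : CE {a | c a = true} := by
  refine ⟨fun a => bif c a then Part.some () else Part.none,
    Partrec.cond hc ?_ Partrec.none, fun a => ?_⟩
  · exact Computable.const ()
  · rcases hca : c a with _ | _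
    · simp [hca, Part.not_none_dom]
    · simp [hca]

end CEl

/-- For computable `Z`, a real is `μ_Z`-Martin-Löf random if and only if it is of the form
`Z ⊕ Y` for `Y` Martin-Löf random with respect to the uniform measure. -/
theorem stmt4 (Z : Cantor) (hZ : Computable Z) (μZ lam : Measure Cantor)
    (hμ : MuZSpec Z μZ) (hlam : UniformSpec lam) (X : Cantor) :
    MLRandom μZ X ↔ ∃ Y : Cantor, MLRandom lam Y ∧ X = interleave Z Y := by
  classical
  constructor
  · -- forward direction
    intro hX
    -- Step 1: the even bits of X agree with Z
    set wb : Str → Bool := fun σ =>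
      bif decide (σ.length % 2 = 1) then
        (σ.getD (σ.length - 1) false == !Z (σ.length / 2)) else false with hwb
    have hwbc : Computable wb := by
      apply Computable.cond
      · exact Primrec.to_comp (PrimrecRel.comp Primrec.eq
          (Primrec.nat_mod.comp Primrec.list_length (Primrec.const 2)) (Primrec.const 1)).decide
      · exact (Primrec₂.to_comp Primrec.beq).comp
          (((Primrec.list_getD false).comp Primrec.id
            (Primrec.nat_sub.comp Primrec.list_length (Primrec.const 1))).to_comp)
          (Primrec.not.to_comp.comp (hZ.comp
            ((Primrec.nat_div.comp Primrec.list_length (Primrec.const 2)).to_comp)))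
      · exact Computable.const false
    have hWtest : MLTest μZ (fun _ => {σ | wb σ = true}) := by
      constructor
      · exact CE.ofBool (hwbc.comp Computable.snd)
      · intro i
        have h0 : μZ (openOf {σ | wb σ = true}) = 0 := by
          refine (measure_biUnion_null_iff (Set.to_countable _)).2 ?_
          intro σ hσ
          have hσ' : wb σ = true := hσ
          rw [hwb] at hσ'
          by_cases hpar : σ.length % 2 = 1
          · simp only [hpar, decide_true, cond_true, beq_iff_eq] at hσ'
            rw [muZ_cyl Z hμ, if_neg]
            intro hok
            have h2k : 2 * (σ.length / 2) < σ.length := by omega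
            have := hok (σ.length / 2) h2k
            have he : 2 * (σ.length / 2) = σ.length - 1 := by omega
            rw [he, hσ'] at this
            exact Bool.not_ne_self _ this
          · simp [hpar] at hσ'
        rw [h0]; exact zero_le
    have heven : ∀ k, X (2*k) = Z k := by
      intro k
      by_contra hne
      obtain ⟨i, hi⟩ := hX _ hWtest
      apply hi
      refine Set.mem_biUnion (?_ : restr X (2*k+1) ∈ {σ | wb σ = true}) (mem_cyl_restr X (2*k+1))
      show wb (restr X (2*k+1)) = true
      rw [hwb]
      simp only [length_restr]
      have hp : (2*k+1) % 2 = 1 := by omega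
      have hd : (2*k+1) / 2 = k := by omega
      have hs : 2*k+1-1 = 2*k := by omega
      rw [hp, hd, hs, getD_restr X (by omega)]
      have : X (2*k) = !Z k := by
        revert hne; cases hxz : X (2*k) <;> cases hzz : Z k <;> simp
      simp [this]
    set Y : Cantor := fun n => X (2*n+1) with hYdef
    have hXY : X = interleave Z Y := by
      funext n
      rcases Nat.even_or_odd n with ⟨k, hk⟩ | ⟨k, hk⟩
      · have hn : n = 2*k := by omega
        subst hn
        rw [interleave_even, heven]
      · have hn : n = 2*k+1 := by omega
        subst hn
        rw [interleave_odd]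
    refine ⟨Y, ?_, hXY⟩
    intro V hV
    obtain ⟨hVce, hVb⟩ := hV
    set c : ℕ × Str → Bool := fun p => decide (p.2 = itl Z (oddPart p.2)) with hc
    have hcc : Computable c :=
      (Primrec₂.to_comp Primrec.eq.decide).comp Computable.snd
        ((computable_itl hZ).comp (primrec_oddPart.to_comp.comp Computable.snd))
    set U : ℕ → Set Str := fun i => {σ | c (i, σ) = true ∧ oddPart σ ∈ V i} with hUdef
    have hUtest : MLTest μZ U := by
      constructor
      · exact CE.guard hVce
          (Computable.pair Computable.fst (primrec_oddPart.to_comp.comp Computable.snd)) hcc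
      · intro i
        have hsub : (fun Y' => interleave Z Y') ⁻¹' openOf (U i) ⊆ openOf (V i) := by
          intro Y' hY'
          simp only [Set.mem_preimage, openOf, Set.mem_iUnion] at hY'
          obtain ⟨σ, ⟨hcb, hVm⟩, hcyl⟩ := hY'
          have hσ : σ = itl Z (oddPart σ) := by
            have := hcb; rw [hc] at this; exact of_decide_eq_true this
          set τ := oddPart σ with hτ
          rw [hσ] at hcyl
          have h1 : restr (interleave Z Y') (2 * τ.length) = itl Z τ :=
            (mem_cyl_itl Z).1 hcyl
          rw [restr_interleave] at h1
          have h2 : restr Y' τ.length = τ := itl_injective Z h1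
          exact Set.mem_biUnion hVm (by simpa [cyl] using h2)
        calc μZ (openOf (U i))
            = lam ((fun Y' => interleave Z Y') ⁻¹' openOf (U i)) := muZ_openOf Z hμ hlam _
          _ ≤ lam (openOf (V i)) := measure_mono hsub
          _ ≤ 1 / 2 ^ i := hVb i
    obtain ⟨i, hi⟩ := hX U hUtest
    refine ⟨i, fun hY' => hi ?_⟩
    simp only [openOf, Set.mem_iUnion] at hY' ⊢
    obtain ⟨τ, hτ, hYc⟩ := hY'
    have hYτ : restr Y τ.length = τ := hYc
    refine ⟨itl Z τ, ⟨?_, ?_⟩, ?_⟩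
    · show c (i, itl Z τ) = true
      rw [hc]
      simp [oddPart_itl]
    · rw [oddPart_itl]; exact hτ
    · rw [hXY]
      exact (mem_cyl_itl Z).2 (by rw [restr_interleave, hYτ])
  · -- backward direction
    rintro ⟨Y, hY, rfl⟩
    intro U hU
    obtain ⟨hUce, hUb⟩ := hU
    set V : ℕ → Set Str := fun i =>
      {τ | itl Z τ ∈ U i ∨ itl Z τ ++ [Z τ.length] ∈ U i} with hVdef
    have hVtest : MLTest lam V := by
      constructor
      · exact CE.or hUce
          (Computable.pair Computable.fst ((computable_itl hZ).comp Computable.snd))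
          (Computable.pair Computable.fst
            (Computable.list_concat.comp ((computable_itl hZ).comp Computable.snd)
              (hZ.comp (Computable.list_length.comp Computable.snd))))
      · intro i
        have hsub : openOf (V i) ⊆ (fun Y' => interleave Z Y') ⁻¹' openOf (U i) := by
          intro Y' hY'
          simp only [openOf, Set.mem_iUnion] at hY'
          obtain ⟨τ, hτor, hYc⟩ := hY'
          have hYτ : restr Y' τ.length = τ := hYc
          simp only [Set.mem_preimage]
          rcases hτor with h | h
          · exact Set.mem_biUnion h
              ((mem_cyl_itl Z).2 (by rw [restr_interleave, hYτ]))
          · refine Set.mem_biUnion h ?_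
            show restr (interleave Z Y') (itl Z τ ++ [Z τ.length]).length = _
            have hlen : (itl Z τ ++ [Z τ.length]).length = 2 * τ.length + 1 := by
              simp [length_itl]
            rw [hlen, restr_interleave_odd, hYτ]
        calc lam (openOf (V i))
            ≤ lam ((fun Y' => interleave Z Y') ⁻¹' openOf (U i)) := measure_mono hsub
          _ = μZ (openOf (U i)) := (muZ_openOf Z hμ hlam _).symm
          _ ≤ 1 / 2 ^ i := hUb i
    obtain ⟨i, hi⟩ := hY V hVtest
    refine ⟨i, fun hXm => hi ?_⟩
    simp only [openOf, Set.mem_iUnion] at hXm ⊢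
    obtain ⟨σ, hσ, hXc⟩ := hXm
    have hXσ : restr (interleave Z Y) σ.length = σ := hXc
    rcases Nat.even_or_odd σ.length with ⟨m, hm⟩ | ⟨m, hm⟩
    · have hm2 : σ.length = 2*m := by omega
      have hσi : σ = itl Z (restr Y m) := by rw [← hXσ, hm2, restr_interleave]
      refine ⟨restr Y m, Or.inl ?_, mem_cyl_restr Y m⟩
      rw [← hσi]; exact hσ
    · have hm2 : σ.length = 2*m+1 := by omega
      have hσi : σ = itl Z (restr Y m) ++ [Z m] := by rw [← hXσ, hm2, restr_interleave_odd]
      refine ⟨restr Y m, Or.inr ?_, mem_cyl_restr Y m⟩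
      show itl Z (restr Y m) ++ [Z (restr Y m).length] ∈ U i
      rw [length_restr, ← hσi]
      exact hσ
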